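/- Assume every entry of D is nonnegative and let λ ≥ 0. Then the supremum over (B, C, s, a) ∈ ℝ^{n×r} × ℝ^{n×r} × ℝⁿ × ℝⁿ of f(Ẽ(B,C,s,a)) − (λ/2)(‖B‖_F² + ‖C‖_F²) equals the supremum over (M, s, a) with M ∈ ℝ^{n×n}, rank(M) ≤ r, s ∈ ℝⁿ, a ∈ ℝⁿ of f(Ẽ'(M,s,a)) − λ·N*(M), where Ẽ'(M,s,a) ∈ ℝ^{n×(n+1)} has first n columns M + diag(s) and last column a, and N*(M) = Σ_{i=1}^{n} √(μ_i) with μ₁,…,μₙ the eigenvalues of Mᵀ M. -/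

import Mathlib

open Matrix

lemma aux_trace_transpose_mul {m r : ℕ} (G H : Matrix (Fin m) (Fin r) ℝ) :
    (Gᵀ * H).trace = ∑ i : Fin m, ∑ k : Fin r, G i k * H i k := by
  simp only [Matrix.trace, Matrix.diag, Matrix.mul_apply, Matrix.transpose_apply]
  rw [Finset.sum_comm]

lemma aux_trace_transpose_mul_self_nonneg {m r : ℕ} (G : Matrix (Fin m) (Fin r) ℝ) :
    0 ≤ (Gᵀ * G).trace := by
  rw [aux_trace_transpose_mul]
  exact Finset.sum_nonneg fun i _ => Finset.sum_nonneg fun k _ => mul_self_nonneg _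

lemma aux_sum_sq_eq_trace {m r : ℕ} (B : Matrix (Fin m) (Fin r) ℝ) :
    (∑ i : Fin m, ∑ k : Fin r, (B i k)^2) = (Bᵀ * B).trace := by
  rw [aux_trace_transpose_mul]
  simp [pow_two]

lemma aux_key {n r : ℕ} (T : Finset (Fin n)) (g : Fin n → Fin r) (hg : Set.InjOn g T)
    (x y : Fin n → ℝ) :
    ∑ k : Fin r, (∑ j ∈ T, if g j = k then x j else 0) *
      (∑ j ∈ T, if g j = k then y j else 0) = ∑ j ∈ T, x j * y j := by
  simp only [Finset.sum_mul_sum]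
  rw [Finset.sum_comm]
  refine Finset.sum_congr rfl (fun j hj => ?_)
  rw [Finset.sum_comm]
  rw [Finset.sum_eq_single j]
  · simp [Finset.sum_ite_eq]
  · intro j' hj' hne
    refine Finset.sum_eq_zero fun k _ => ?_
    by_cases h1 : g j = k
    · have h2 : g j' ≠ k := fun h2 => hne (hg hj' hj (h2.trans h1.symm))
      simp [h2]
    · simp [h1]
  · intro h; exact absurd hj h

section Spectral

variable {n : ℕ} (M : Matrix (Fin n) (Fin n) ℝ) (hA : (Mᵀ * M).IsHermitian)

/-- The orthogonal matrix of eigenvectors of `Mᵀ * M`. -/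
noncomputable def auxU : Matrix (Fin n) (Fin n) ℝ := hA.eigenvectorUnitary

/-- `W = M * U`; its columns are `M` applied to the eigenvectors. -/
noncomputable def auxW : Matrix (Fin n) (Fin n) ℝ := M * auxU M hA

/-- Inverse singular values (0 where the eigenvalue vanishes). -/
noncomputable def auxd : Fin n → ℝ := fun j =>
  if hA.eigenvalues j = 0 then 0 else (Real.sqrt (hA.eigenvalues j))⁻¹

/-- `Y` has columns the left singular vectors (scaled to unit norm, or zero). -/
noncomputable def auxY : Matrix (Fin n) (Fin n) ℝ := auxW M hA * diagonal (auxd M hA)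

lemma auxU_star : star (auxU M hA) = (auxU M hA)ᵀ := by
  rw [Matrix.star_eq_conjTranspose, Matrix.conjTranspose_eq_transpose_of_trivial]

lemma auxU_mul_transpose : auxU M hA * (auxU M hA)ᵀ = 1 := by
  rw [← auxU_star]
  exact (Matrix.mem_unitaryGroup_iff).mp (hA.eigenvectorUnitary).2

lemma auxU_transpose_mul : (auxU M hA)ᵀ * auxU M hA = 1 := by
  rw [← auxU_star]
  exact (Matrix.mem_unitaryGroup_iff').mp (hA.eigenvectorUnitary).2

lemma aux_spectral :
    (auxU M hA)ᵀ * (Mᵀ * M) * auxU M hA = diagonal hA.eigenvalues := by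
  have h := hA.conjStarAlgAut_star_eigenvectorUnitary
  rw [Unitary.conjStarAlgAut_star_apply, Matrix.star_eq_conjTranspose,
    Matrix.conjTranspose_eq_transpose_of_trivial] at h
  unfold auxU
  rw [h, RCLike.ofReal_real_eq_id, Function.id_comp]

lemma auxW_transpose_mul : (auxW M hA)ᵀ * auxW M hA = diagonal hA.eigenvalues := by
  rw [auxW, Matrix.transpose_mul, ← aux_spectral M hA]
  noncomm_ring

lemma aux_eig_nonneg (j : Fin n) : 0 ≤ hA.eigenvalues j :=
  (Matrix.posSemidef_conjTranspose_mul_self M).eigenvalues_nonneg j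

lemma auxW_col_zero {j : Fin n} (hj : hA.eigenvalues j = 0) (i : Fin n) :
    auxW M hA i j = 0 := by
  have h : ((auxW M hA)ᵀ * auxW M hA) j j = 0 := by
    rw [auxW_transpose_mul, Matrix.diagonal_apply_eq, hj]
  rw [Matrix.mul_apply] at h
  simp only [Matrix.transpose_apply] at h
  have := (Finset.sum_eq_zero_iff_of_nonneg
    (fun i _ => mul_self_nonneg (auxW M hA i j))).mp h i (Finset.mem_univ i)
  exact mul_self_eq_zero.mp this

lemma auxY_apply (i j : Fin n) : auxY M hA i j = auxW M hA i j * auxd M hA j := by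
  rw [auxY, Matrix.mul_diagonal]

lemma auxY_col_zero {j : Fin n} (hj : hA.eigenvalues j = 0) (i : Fin n) :
    auxY M hA i j = 0 := by
  rw [auxY_apply, auxW_col_zero M hA hj, zero_mul]

lemma auxY_transpose_mul : (auxY M hA)ᵀ * auxY M hA =
    diagonal (fun j => if hA.eigenvalues j = 0 then 0 else 1) := by
  rw [auxY, Matrix.transpose_mul, Matrix.diagonal_transpose, mul_assoc,
    ← mul_assoc (auxW M hA)ᵀ, auxW_transpose_mul, Matrix.diagonal_mul_diagonal,
    Matrix.diagonal_mul_diagonal]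
  refine congrArg Matrix.diagonal (funext fun j => ?_)
  by_cases hj : hA.eigenvalues j = 0
  · simp [auxd, hj]
  · have hpos : 0 < hA.eigenvalues j := lt_of_le_of_ne (aux_eig_nonneg M hA j) (Ne.symm hj)
    have hsq : Real.sqrt (hA.eigenvalues j) * Real.sqrt (hA.eigenvalues j)
        = hA.eigenvalues j := Real.mul_self_sqrt (le_of_lt hpos)
    simp only [auxd, if_neg hj]
    calc (Real.sqrt (hA.eigenvalues j))⁻¹ *
          (hA.eigenvalues j * (Real.sqrt (hA.eigenvalues j))⁻¹)
        = hA.eigenvalues j *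
          (Real.sqrt (hA.eigenvalues j) * Real.sqrt (hA.eigenvalues j))⁻¹ := by
          rw [mul_inv]; ring
      _ = hA.eigenvalues j * (hA.eigenvalues j)⁻¹ := by rw [hsq]
      _ = 1 := mul_inv_cancel₀ hj

lemma auxYtW : (auxY M hA)ᵀ * auxW M hA = diagonal (fun j =>
    Real.sqrt (hA.eigenvalues j)) := by
  rw [auxY, Matrix.transpose_mul, Matrix.diagonal_transpose, mul_assoc,
    auxW_transpose_mul, Matrix.diagonal_mul_diagonal]
  refine congrArg Matrix.diagonal (funext fun j => ?_)
  by_cases hj : hA.eigenvalues j = 0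
  · simp [auxd, hj]
  · simp only [auxd, if_neg hj]
    rw [inv_mul_eq_div, Real.div_sqrt]

lemma aux_sum_sqrt_eq_trace :
    ∑ j : Fin n, Real.sqrt (hA.eigenvalues j) = ((auxY M hA)ᵀ * auxW M hA).trace := by
  rw [auxYtW, Matrix.trace_diagonal]

lemma auxY_proj_idem :
    (auxY M hA * (auxY M hA)ᵀ) * (auxY M hA * (auxY M hA)ᵀ)
      = auxY M hA * (auxY M hA)ᵀ := by
  have hYe : auxY M hA * diagonal (fun j => if hA.eigenvalues j = 0 then (0:ℝ) else 1)
      = auxY M hA := by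
    ext i j
    rw [Matrix.mul_diagonal]
    by_cases hj : hA.eigenvalues j = 0
    · rw [auxY_col_zero M hA hj]; simp [hj]
    · simp [hj]
  calc (auxY M hA * (auxY M hA)ᵀ) * (auxY M hA * (auxY M hA)ᵀ)
      = auxY M hA * ((auxY M hA)ᵀ * auxY M hA) * (auxY M hA)ᵀ := by noncomm_ring
    _ = auxY M hA * (auxY M hA)ᵀ := by rw [auxY_transpose_mul, hYe]

end Spectral

/-- Nuclear norm of `B * Cᵀ` is at most half the sum of squared Frobenius norms. -/
theorem aux_nuc {n r : ℕ} (B C : Matrix (Fin n) (Fin r) ℝ)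
    (hA : ((B * Cᵀ)ᵀ * (B * Cᵀ)).IsHermitian) :
    ∑ j : Fin n, Real.sqrt (hA.eigenvalues j) ≤
      ((∑ i : Fin n, ∑ k : Fin r, (B i k)^2) +
       (∑ i : Fin n, ∑ k : Fin r, (C i k)^2)) / 2 := by
  set M := B * Cᵀ with hM
  set U := auxU M hA with hU
  set Y := auxY M hA with hY
  set P : Matrix (Fin r) (Fin n) ℝ := Bᵀ * Y with hP
  set Q : Matrix (Fin r) (Fin n) ℝ := Cᵀ * U with hQ
  have step1 : ∑ j : Fin n, Real.sqrt (hA.eigenvalues j) = (Pᵀ * Q).trace := by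
    rw [aux_sum_sqrt_eq_trace M hA]
    have h : Pᵀ * Q = Yᵀ * (M * U) := by
      rw [hP, hQ, Matrix.transpose_mul, Matrix.transpose_transpose, hM]
      simp only [Matrix.mul_assoc]
    simp only [auxW, ← hU, ← hY]
    rw [h]
  have step2 : (Pᵀ * Q).trace ≤ ((Pᵀ * P).trace + (Qᵀ * Q).trace) / 2 := by
    rw [aux_trace_transpose_mul, aux_trace_transpose_mul P P, aux_trace_transpose_mul Q Q,
      ← Finset.sum_add_distrib, Finset.sum_div]
    refine Finset.sum_le_sum fun k _ => ?_
    rw [← Finset.sum_add_distrib, Finset.sum_div]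
    refine Finset.sum_le_sum fun j _ => ?_
    nlinarith [sq_nonneg (P k j - Q k j)]
  have stepQ : (Qᵀ * Q).trace = ∑ i : Fin n, ∑ k : Fin r, (C i k)^2 := by
    rw [Matrix.trace_mul_comm]
    have hQQ : Q * Qᵀ = Cᵀ * C := by
      rw [hQ, Matrix.transpose_mul, Matrix.transpose_transpose, Matrix.mul_assoc,
        ← Matrix.mul_assoc U, auxU_mul_transpose, Matrix.one_mul]
    rw [hQQ, ← aux_sum_sq_eq_trace]
  have stepP : (Pᵀ * P).trace ≤ ∑ i : Fin n, ∑ k : Fin r, (B i k)^2 := by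
    rw [Matrix.trace_mul_comm]
    set P₀ : Matrix (Fin n) (Fin n) ℝ := Y * Yᵀ with hP₀
    have hP₀t : P₀ᵀ = P₀ := by
      rw [hP₀, Matrix.transpose_mul, Matrix.transpose_transpose]
    have hP₀idem : P₀ * P₀ = P₀ := auxY_proj_idem M hA
    have hPP : P * Pᵀ = Bᵀ * (P₀ * B) := by
      rw [hP, Matrix.transpose_mul, Matrix.transpose_transpose, hP₀]
      simp only [Matrix.mul_assoc]
    set G : Matrix (Fin n) (Fin r) ℝ := B - P₀ * B with hG
    have hexp : Gᵀ * G = Bᵀ * B - Bᵀ * (P₀ * B) := by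
      have h1 : (P₀ * B)ᵀ * B = Bᵀ * (P₀ * B) := by
        rw [Matrix.transpose_mul, hP₀t, Matrix.mul_assoc]
      have h2 : (P₀ * B)ᵀ * (P₀ * B) = Bᵀ * (P₀ * B) := by
        rw [Matrix.transpose_mul, hP₀t, Matrix.mul_assoc, ← Matrix.mul_assoc P₀,
          hP₀idem]
      rw [hG, Matrix.transpose_sub, Matrix.sub_mul, Matrix.mul_sub, Matrix.mul_sub,
        h1, h2]
      abel
    have htr : (Gᵀ * G).trace = (Bᵀ * B).trace - (Bᵀ * (P₀ * B)).trace := by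
      rw [hexp, Matrix.trace_sub]
    have hnn := aux_trace_transpose_mul_self_nonneg G
    rw [hPP]
    rw [aux_sum_sq_eq_trace B]
    linarith
  linarith [step1, step2, stepQ, stepP]

/-- Any matrix of rank at most `r` admits a balanced rank-`r` factorization whose
squared Frobenius norms both equal the nuclear norm. -/
theorem aux_fac {n r : ℕ} (hr : 0 < r) (M : Matrix (Fin n) (Fin n) ℝ)
    (hA : (Mᵀ * M).IsHermitian) (hrank : M.rank ≤ r) :
    ∃ B C : Matrix (Fin n) (Fin r) ℝ, B * Cᵀ = M ∧
      (∑ i : Fin n, ∑ k : Fin r, (B i k)^2) = ∑ j : Fin n, Real.sqrt (hA.eigenvalues j) ∧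
      (∑ i : Fin n, ∑ k : Fin r, (C i k)^2) = ∑ j : Fin n, Real.sqrt (hA.eigenvalues j) := by
  classical
  set U := auxU M hA with hU
  set Y := auxY M hA with hY
  set μ := hA.eigenvalues with hμ
  -- an embedding of the nonzero-eigenvalue indices into `Fin r`
  have hcard : Fintype.card {j // μ j ≠ 0} ≤ Fintype.card (Fin r) := by
    rw [Fintype.card_fin]
    calc Fintype.card {j // μ j ≠ 0} = (Mᵀ * M).rank := hA.rank_eq_card_non_zero_eigs.symm
      _ = M.rank := Matrix.rank_transpose_mul_self M
      _ ≤ r := hrank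
  obtain ⟨e⟩ := Function.Embedding.nonempty_of_card_le hcard
  set T : Finset (Fin n) := Finset.univ.filter (fun j => μ j ≠ 0) with hT
  set g : Fin n → Fin r := fun j => if h : μ j ≠ 0 then e ⟨j, h⟩ else ⟨0, hr⟩ with hg
  have hginj : Set.InjOn g ↑T := by
    intro j hj j' hj' hgj
    have hjT : μ j ≠ 0 := by
      simpa [hT] using hj
    have hj'T : μ j' ≠ 0 := by
      simpa [hT] using hj'
    rw [hg] at hgj
    simp only [dif_pos hjT, dif_pos hj'T] at hgj
    exact congrArg Subtype.val (e.injective hgj)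
  set B : Matrix (Fin n) (Fin r) ℝ :=
    fun i k => ∑ j ∈ T, if g j = k then Real.sqrt (Real.sqrt (μ j)) * Y i j else 0 with hB
  set C : Matrix (Fin n) (Fin r) ℝ :=
    fun i k => ∑ j ∈ T, if g j = k then Real.sqrt (Real.sqrt (μ j)) * U i j else 0 with hC
  have hsq : ∀ j ∈ T, Real.sqrt (Real.sqrt (μ j)) * Real.sqrt (Real.sqrt (μ j))
      = Real.sqrt (μ j) := fun j _ => Real.mul_self_sqrt (Real.sqrt_nonneg _)
  have hμpos : ∀ j ∈ T, 0 < μ j := by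
    intro j hj
    have : μ j ≠ 0 := by simpa [hT] using hj
    exact lt_of_le_of_ne (aux_eig_nonneg M hA j) (Ne.symm this)
  -- the key cross-term collapse
  have hkey : ∀ (x y : Fin n → ℝ),
      ∑ k : Fin r, (∑ j ∈ T, if g j = k then x j else 0) *
        (∑ j ∈ T, if g j = k then y j else 0) = ∑ j ∈ T, x j * y j :=
    fun x y => aux_key T g hginj x y
  refine ⟨B, C, ?_, ?_, ?_⟩
  · -- B * Cᵀ = M
    ext i i'
    rw [Matrix.mul_apply]
    simp only [Matrix.transpose_apply]
    simp only [hB, hC]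
    rw [hkey]
    have hterm : ∀ j ∈ T, (Real.sqrt (Real.sqrt (μ j)) * Y i j) *
        (Real.sqrt (Real.sqrt (μ j)) * U i' j) = auxW M hA i j * U i' j := by
      intro j hj
      have h1 : (Real.sqrt (Real.sqrt (μ j)) * Y i j) *
          (Real.sqrt (Real.sqrt (μ j)) * U i' j)
          = (Real.sqrt (μ j) * Y i j) * U i' j := by
        rw [← hsq j hj]; ring_nf; rw [Real.sqrt_sq (Real.sqrt_nonneg _)]
      rw [h1, hY, auxY_apply]
      have hd : auxd M hA j = (Real.sqrt (μ j))⁻¹ := by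
        have : μ j ≠ 0 := by simpa [hT] using hj
        simp [auxd, this, hμ]
        intro h; exact absurd h this
      rw [hd]
      have hs : Real.sqrt (μ j) ≠ 0 := by
        have := hμpos j hj
        positivity
      field_simp
    rw [Finset.sum_congr rfl hterm]
    have hfull : ∑ j ∈ T, auxW M hA i j * U i' j
        = ∑ j : Fin n, auxW M hA i j * U i' j := by
      refine Finset.sum_subset (Finset.subset_univ T) ?_
      intro j _ hjT
      have hj0 : μ j = 0 := by
        by_contra h
        exact hjT (by simp [hT, h])
      rw [auxW_col_zero M hA hj0, zero_mul]
    rw [hfull]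
    have : ∑ j : Fin n, auxW M hA i j * U i' j = (auxW M hA * Uᵀ) i i' := by
      rw [Matrix.mul_apply]
      simp [Matrix.transpose_apply]
    rw [this, auxW, ← hU, Matrix.mul_assoc, auxU_mul_transpose M hA, Matrix.mul_one]
  · -- sum of squares of B
    have hrow : ∀ i : Fin n, ∑ k : Fin r, (B i k)^2
        = ∑ j ∈ T, Real.sqrt (μ j) * (Y i j * Y i j) := by
      intro i
      simp only [pow_two, hB]
      rw [hkey]
      refine Finset.sum_congr rfl fun j hj => ?_
      rw [← hsq j hj]; ring_nf; rw [Real.sqrt_sq (Real.sqrt_nonneg _)]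
    rw [Finset.sum_congr rfl (fun i _ => hrow i), Finset.sum_comm]
    have hcol : ∀ j ∈ T, ∑ i : Fin n, Real.sqrt (μ j) * (Y i j * Y i j)
        = Real.sqrt (μ j) := by
      intro j hj
      rw [← Finset.mul_sum]
      have : ∑ i : Fin n, Y i j * Y i j = (Yᵀ * Y) j j := by
        rw [Matrix.mul_apply]; simp [Matrix.transpose_apply]
      rw [this, hY, auxY_transpose_mul, Matrix.diagonal_apply_eq]
      have hj0 : μ j ≠ 0 := by simpa [hT] using hj
      simp [hj0, hμ]
      intro h; exact absurd h hj0
    rw [Finset.sum_congr rfl hcol]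
    refine Finset.sum_subset (Finset.subset_univ T) ?_
    intro j _ hjT
    have hj0 : μ j = 0 := by
      by_contra h
      exact hjT (by simp [hT, h])
    rw [hj0, Real.sqrt_zero]
  · -- sum of squares of C
    have hrow : ∀ i : Fin n, ∑ k : Fin r, (C i k)^2
        = ∑ j ∈ T, Real.sqrt (μ j) * (U i j * U i j) := by
      intro i
      simp only [pow_two, hC]
      rw [hkey]
      refine Finset.sum_congr rfl fun j hj => ?_
      rw [← hsq j hj]; ring_nf; rw [Real.sqrt_sq (Real.sqrt_nonneg _)]
    rw [Finset.sum_congr rfl (fun i _ => hrow i), Finset.sum_comm]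
    have hcol : ∀ j ∈ T, ∑ i : Fin n, Real.sqrt (μ j) * (U i j * U i j)
        = Real.sqrt (μ j) := by
      intro j hj
      rw [← Finset.mul_sum]
      have : ∑ i : Fin n, U i j * U i j = (Uᵀ * U) j j := by
        rw [Matrix.mul_apply]; simp [Matrix.transpose_apply]
      rw [this, hU, auxU_transpose_mul, Matrix.one_apply_eq, mul_one]
    rw [Finset.sum_congr rfl hcol]
    refine Finset.sum_subset (Finset.subset_univ T) ?_
    intro j _ hjT
    have hj0 : μ j = 0 := by
      by_contra h
      exact hjT (by simp [hT, h])
    rw [hj0, Real.sqrt_zero]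

lemma aux_term_bound {d : ℝ} (hd : 0 ≤ d) (x : ℝ) : d * x - Real.exp x ≤ d^2 := by
  rcases le_or_gt x 0 with h | h
  · have h1 : d * x ≤ 0 := mul_nonpos_of_nonneg_of_nonpos hd h
    nlinarith [Real.exp_pos x, sq_nonneg d]
  · have h1 : x / 2 + 1 ≤ Real.exp (x / 2) := Real.add_one_le_exp _
    have h2 : Real.exp x = Real.exp (x / 2) * Real.exp (x / 2) := by
      rw [← Real.exp_add]; ring_nf
    have h3 := mul_self_le_mul_self (by linarith : (0:ℝ) ≤ x / 2 + 1) h1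
    nlinarith [sq_nonneg (x / 2 - d)]

/-- With `D` entrywise nonnegative and `λ ≥ 0`, the supremum of the factored, Frobenius-
regularized problem over `(B, C, s, a)` equals the supremum of the rank-constrained,
nuclear-norm-regularized problem over `(M, s, a)` with `rank M ≤ r`. -/
theorem factored_reg_sup_eq_nuclear_reg_sup
    (n N r : ℕ) (hn : 0 < n) (hN : 0 < N) (hr : 0 < r)
    (D : Matrix (Fin n) (Fin N) ℝ)
    (hD : ∀ i j, 0 ≤ D i j)
    (Pit : Matrix (Fin (n + 1)) (Fin N) ℝ)
    (f : Matrix (Fin n) (Fin (n + 1)) ℝ → ℝ)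
    (hf : ∀ E : Matrix (Fin n) (Fin (n + 1)) ℝ,
      f E = (1 / (N : ℝ)) * ∑ i : Fin n, ∑ j : Fin N,
        (D i j * (E * Pit) i j - Real.exp ((E * Pit) i j)))
    (Etil : Matrix (Fin n) (Fin r) ℝ → Matrix (Fin n) (Fin r) ℝ →
      (Fin n → ℝ) → (Fin n → ℝ) → Matrix (Fin n) (Fin (n + 1)) ℝ)
    (hEtil : ∀ B C s a,
      (∀ (i : Fin n) (j : Fin n),
        Etil B C s a i (Fin.castSucc j) = (B * Cᵀ + Matrix.diagonal s) i j) ∧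
      (∀ i : Fin n, Etil B C s a i (Fin.last n) = a i))
    (Etil' : Matrix (Fin n) (Fin n) ℝ →
      (Fin n → ℝ) → (Fin n → ℝ) → Matrix (Fin n) (Fin (n + 1)) ℝ)
    (hEtil' : ∀ M s a,
      (∀ (i : Fin n) (j : Fin n),
        Etil' M s a i (Fin.castSucc j) = (M + Matrix.diagonal s) i j) ∧
      (∀ i : Fin n, Etil' M s a i (Fin.last n) = a i))
    (hH : ∀ M : Matrix (Fin n) (Fin n) ℝ, (Mᵀ * M).IsHermitian)
    (lam : ℝ) (hlam : 0 ≤ lam) :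
    sSup {x : ℝ | ∃ (B C : Matrix (Fin n) (Fin r) ℝ) (s a : Fin n → ℝ),
        x = f (Etil B C s a) -
          (lam / 2) * ((∑ i : Fin n, ∑ k : Fin r, (B i k) ^ 2) +
                       (∑ i : Fin n, ∑ k : Fin r, (C i k) ^ 2))} =
    sSup {x : ℝ | ∃ (M : Matrix (Fin n) (Fin n) ℝ) (s a : Fin n → ℝ),
        M.rank ≤ r ∧
        x = f (Etil' M s a) - lam * ∑ i : Fin n, Real.sqrt ((hH M).eigenvalues i)} := by
  set S1 := {x : ℝ | ∃ (B C : Matrix (Fin n) (Fin r) ℝ) (s a : Fin n → ℝ),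
        x = f (Etil B C s a) -
          (lam / 2) * ((∑ i : Fin n, ∑ k : Fin r, (B i k) ^ 2) +
                       (∑ i : Fin n, ∑ k : Fin r, (C i k) ^ 2))} with hS1
  set S2 := {x : ℝ | ∃ (M : Matrix (Fin n) (Fin n) ℝ) (s a : Fin n → ℝ),
        M.rank ≤ r ∧
        x = f (Etil' M s a) - lam * ∑ i : Fin n, Real.sqrt ((hH M).eigenvalues i)} with hS2
  -- the two parametrizations agree
  have hEeq : ∀ (B C : Matrix (Fin n) (Fin r) ℝ) (s a : Fin n → ℝ),
      Etil B C s a = Etil' (B * Cᵀ) s a := by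
    intro B C s a
    ext i j
    refine Fin.lastCases ?_ ?_ j
    · rw [(hEtil B C s a).2 i, (hEtil' (B * Cᵀ) s a).2 i]
    · intro j'
      rw [(hEtil B C s a).1 i j', (hEtil' (B * Cᵀ) s a).1 i j']
  -- `f` is bounded above
  set c : ℝ := (1 / (N : ℝ)) * ∑ i : Fin n, ∑ j : Fin N, (D i j)^2 with hc
  have hfb : ∀ E, f E ≤ c := by
    intro E
    rw [hf E, hc]
    refine mul_le_mul_of_nonneg_left ?_ (by positivity)
    exact Finset.sum_le_sum fun i _ => Finset.sum_le_sum fun j _ =>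
      aux_term_bound (hD i j) _
  have hbdd1 : BddAbove S1 := by
    refine ⟨c, fun x hx => ?_⟩
    obtain ⟨B, C, s, a, rfl⟩ := hx
    have hpen : 0 ≤ (lam / 2) * ((∑ i : Fin n, ∑ k : Fin r, (B i k) ^ 2) +
        (∑ i : Fin n, ∑ k : Fin r, (C i k) ^ 2)) := by positivity
    linarith [hfb (Etil B C s a)]
  have hbdd2 : BddAbove S2 := by
    refine ⟨c, fun x hx => ?_⟩
    obtain ⟨M, s, a, -, rfl⟩ := hx
    have hpen : 0 ≤ lam * ∑ i : Fin n, Real.sqrt ((hH M).eigenvalues i) := by positivity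
    linarith [hfb (Etil' M s a)]
  have hne1 : S1.Nonempty := ⟨_, ⟨0, 0, 0, 0, rfl⟩⟩
  have hne2 : S2.Nonempty := by
    refine ⟨_, ⟨0, 0, 0, ?_, rfl⟩⟩
    simp [Matrix.rank_zero]
  refine le_antisymm ?_ ?_
  · refine csSup_le hne1 fun x hx => ?_
    obtain ⟨B, C, s, a, rfl⟩ := hx
    have hrank : (B * Cᵀ).rank ≤ r := by
      have h1 := Matrix.rank_mul_le_left B Cᵀ
      have h2 := Matrix.rank_le_card_width B
      rw [Fintype.card_fin] at h2
      omega
    have hmem : f (Etil' (B * Cᵀ) s a) -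
        lam * ∑ i : Fin n, Real.sqrt ((hH (B * Cᵀ)).eigenvalues i) ∈ S2 :=
      ⟨B * Cᵀ, s, a, hrank, rfl⟩
    refine le_trans ?_ (le_csSup hbdd2 hmem)
    rw [hEeq B C s a]
    have hnuc := aux_nuc B C (hH (B * Cᵀ))
    have := mul_le_mul_of_nonneg_left hnuc hlam
    linarith
  · refine csSup_le hne2 fun x hx => ?_
    obtain ⟨M, s, a, hrank, rfl⟩ := hx
    obtain ⟨B, C, hBC, hB, hC⟩ := aux_fac hr M (hH M) hrank
    have hmem : f (Etil B C s a) -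
        (lam / 2) * ((∑ i : Fin n, ∑ k : Fin r, (B i k) ^ 2) +
                     (∑ i : Fin n, ∑ k : Fin r, (C i k) ^ 2)) ∈ S1 :=
      ⟨B, C, s, a, rfl⟩
    refine le_trans (le_of_eq ?_) (le_csSup hbdd1 hmem)
    rw [hEeq B C s a, hBC, hB, hC]
    ring
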